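/- Suppose Σ and Σ̂ are partitions and β : Σ → Σ̂ is a bijection such that for each σ ∈ Σ, |β(σ)| = |σ| (cardinality-preserving on each block), and such that for all X ⊆ Σ, σ ∈ Σ: ⋃β[X] ∈ β(σ) iff ⋃X ∈ σ. If X ⊆ Σ, Y₁,…,Y_L ⊆ Σ are distinct subfamilies with ⋃X = {⋃Y₁, …, ⋃Y_L}, and the map X' ↦ ⋃β[X'] is injective on subfamilies of Σ, then ⋃β[X] = {⋃β[Y₁], …, ⋃β[Y_L]}. -/

import Mathlib

/-- The image of a ZF-set under an arbitrary function (classically definable). -/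
noncomputable def zImage (f : ZFSet → ZFSet) (X : ZFSet) : ZFSet :=
  @ZFSet.image f (Classical.allZFSetDefinable fun s => f (s 0)) X

/-- `℘*(X) = { Y : Y ⊆ ⋃X ∧ ∀ z ∈ X, z ∩ Y ≠ ∅ }` for ZF-sets. -/
def zPowast (X : ZFSet) : ZFSet :=
  ZFSet.sep (fun Y => ∀ z ∈ X, z ∩ Y ≠ ∅) (ZFSet.powerset (ZFSet.sUnion X))

/-- A partition: a ZF-family of pairwise disjoint nonempty sets. -/
def ZFPartition (S : ZFSet) : Prop :=
  (∀ σ ∈ S, σ ≠ (∅ : ZFSet)) ∧ ∀ σ ∈ S, ∀ τ ∈ S, σ ≠ τ → σ ∩ τ = (∅ : ZFSet)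

/-- A ZF-set is transitive if each of its elements is a subset of it. -/
def ZFTransitive (S : ZFSet) : Prop := ∀ x ∈ S, x ⊆ S

/-- If `β` is a cardinality-preserving ∈-simulation between the partitions `Sg` and
`Sgh`, `X ⊆ Sg`, `Y₁,…,Y_L ⊆ Sg` are distinct subfamilies with `⋃X = {⋃Y₁,…,⋃Y_L}`,
and `X' ↦ ⋃β[X']` is injective on subfamilies of `Sg`, then
`⋃β[X] = {⋃β[Y₁],…,⋃β[Y_L]}`. -/
theorem singleton_literal_preserved (Sg Sgh : ZFSet) (β : ZFSet → ZFSet)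
    (hSg : ZFPartition Sg) (hSgh : ZFPartition Sgh)
    (hβ : Set.BijOn β Sg.toSet Sgh.toSet)
    (hcard : ∀ σ ∈ Sg, Cardinal.mk (β σ).toSet = Cardinal.mk σ.toSet)
    (hsim : ∀ X : ZFSet, X ⊆ Sg → ∀ σ ∈ Sg,
      (ZFSet.sUnion (zImage β X) ∈ β σ ↔ ZFSet.sUnion X ∈ σ))
    (hinj : ∀ X₁ X₂ : ZFSet, X₁ ⊆ Sg → X₂ ⊆ Sg →
      ZFSet.sUnion (zImage β X₁) = ZFSet.sUnion (zImage β X₂) → X₁ = X₂)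
    (L : ℕ) (X : ZFSet) (hX : X ⊆ Sg)
    (Y : Fin L → ZFSet) (hY : ∀ i, Y i ⊆ Sg) (hYinj : Function.Injective Y)
    (hXY : ∀ t : ZFSet, t ∈ ZFSet.sUnion X ↔ ∃ i, t = ZFSet.sUnion (Y i)) :
    ∀ t : ZFSet, t ∈ ZFSet.sUnion (zImage β X) ↔
      ∃ i, t = ZFSet.sUnion (zImage β (Y i)) := by
  classical
  have hmem_im : ∀ (Z y : ZFSet), y ∈ zImage β Z ↔ ∃ x ∈ Z, β x = y := by
    intro Z y
    simp [zImage, ZFSet.mem_image]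
  intro t
  constructor
  · rintro ht
    rw [ZFSet.mem_sUnion] at ht
    obtain ⟨b, hb, htb⟩ := ht
    rw [hmem_im] at hb
    obtain ⟨σ, hσX, rfl⟩ := hb
    have hσSg : σ ∈ Sg := hX hσX
    -- every element of σ is a ⋃ Y i
    have hsub : σ.toSet ⊆ Set.range (fun i : Fin L => ZFSet.sUnion (Y i)) := by
      intro s hs
      have : s ∈ ZFSet.sUnion X := ZFSet.mem_sUnion.2 ⟨σ, hσX, hs⟩
      obtain ⟨i, hi⟩ := (hXY s).1 this
      exact ⟨i, hi.symm⟩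
    have hSfin : σ.toSet.Finite := (Set.finite_range _).subset hsub
    have hTfin : (β σ).toSet.Finite := by
      rw [← Cardinal.lt_aleph0_iff_set_finite] at hSfin ⊢
      rwa [hcard σ hσSg]
    -- the map
    set F : ZFSet → ZFSet := fun s =>
      if h : ∃ i, s = ZFSet.sUnion (Y i) then ZFSet.sUnion (zImage β (Y h.choose)) else ∅
      with hF
    have hFspec : ∀ s ∈ σ.toSet, ∃ i, s = ZFSet.sUnion (Y i) ∧
        F s = ZFSet.sUnion (zImage β (Y i)) := by
      intro s hs
      obtain ⟨i, hi⟩ := hsub hs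
      have hex : ∃ j, s = ZFSet.sUnion (Y j) := ⟨i, hi.symm⟩
      exact ⟨hex.choose, hex.choose_spec, by simp [hF, dif_pos hex]⟩
    have hmaps : Set.MapsTo F σ.toSet (β σ).toSet := by
      intro s hs
      obtain ⟨i, hsi, hFi⟩ := hFspec s hs
      rw [hFi]
      have : ZFSet.sUnion (Y i) ∈ σ := by rw [← hsi]; exact hs
      exact (hsim (Y i) (hY i) σ hσSg).2 this
    have hinjOn : Set.InjOn F σ.toSet := by
      intro s1 h1 s2 h2 heq
      obtain ⟨i1, hs1, hF1⟩ := hFspec s1 h1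
      obtain ⟨i2, hs2, hF2⟩ := hFspec s2 h2
      rw [hF1, hF2] at heq
      have := hYinj (hinj (Y i1) (Y i2) (hY i1) (hY i2) heq)
      rw [hs1, hs2, this]
    -- surjectivity via cardinality
    have hcardn : σ.toSet.ncard = (β σ).toSet.ncard := by
      rw [← Nat.card_coe_set_eq, ← Nat.card_coe_set_eq, Nat.card, Nat.card,
        hcard σ hσSg]
    have himg : F '' σ.toSet = (β σ).toSet := by
      exact Set.eq_of_subset_of_ncard_le (Set.mapsTo_iff_image_subset.1 hmaps)
        (le_of_eq (by rw [Set.ncard_image_of_injOn hinjOn, hcardn])) hTfin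
    have : t ∈ F '' σ.toSet := by rw [himg]; exact htb
    obtain ⟨s, hs, hFs⟩ := this
    obtain ⟨i, _, hFi⟩ := hFspec s hs
    exact ⟨i, by rw [← hFs, hFi]⟩
  · rintro ⟨i, rfl⟩
    have : ZFSet.sUnion (Y i) ∈ ZFSet.sUnion X := (hXY _).2 ⟨i, rfl⟩
    obtain ⟨σ, hσX, hσ⟩ := ZFSet.mem_sUnion.1 this
    have : ZFSet.sUnion (zImage β (Y i)) ∈ β σ :=
      (hsim (Y i) (hY i) σ (hX hσX)).2 hσ
    exact ZFSet.mem_sUnion.2 ⟨β σ, (hmem_im X (β σ)).2 ⟨σ, hσX, rfl⟩, this⟩
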